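/- Fix a positive integer k and functions α, β : Fin k → Fin k. There exists an assignment of a complex number a_P to each set partition P of Fin k ⊕ Fin k, independent of n, such that for every positive integer n, the averaged operator (1/n!) · Σ_{x ∈ S_n} ρ(x)⁻¹ ∘ (E_α ∘ E_β^T) ∘ ρ(x) on W_{k,n} equals Σ_P a_P · T_P, where the sum is over all set partitions P of Fin k ⊕ Fin k. -/

import Mathlib

/-!
Formalization of statements from "Stable characters from permutation patterns"
by C. Gaetz and C. Ryba.
-/

open scoped Classical

noncomputable section

/-- A word `I` (with values in a linear order `M`) is `σ`-sorted:
`I a < I b` if and only if `σ a < σ b`. -/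
def IsSorted {k : ℕ} {M : Type*} [LinearOrder M] (σ : Fin k → Fin k) (I : Fin k → M) : Prop :=
  ∀ a b : Fin k, I a < I b ↔ σ a < σ b

/-- `N_σ(g)`: the number of strictly increasing words `I : Fin k → Fin n` such that
`g ∘ I` is `σ`-sorted, i.e. the number of occurrences of the pattern `σ` in `g`. -/
def patCount (k n : ℕ) (σ : Fin k → Fin k) (g : Equiv.Perm (Fin n)) : ℕ :=
  Nat.card {I : Fin k → Fin n // StrictMono I ∧ IsSorted σ (⇑g ∘ I)}

/-- `m_i(g)`: the number of cycles of length `i` in the cycle decomposition of `g`,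
where fixed points count as cycles of length 1. -/
def cycleCount {n : ℕ} (g : Equiv.Perm (Fin n)) (i : ℕ) : ℕ :=
  if i = 1 then Nat.card {x : Fin n // g x = x} else Multiset.count i g.cycleType

/-- `W k n`: the space of `ℂ`-valued functions on words, a model of the `k`-th tensor power
of the permutation representation of `S_n`. -/
abbrev W (k n : ℕ) := (Fin k → Fin n) → ℂ

/-- The labelling `ℓ_{J,I}` of `Fin k ⊕ Fin k` determined by the words `J` and `I`:
unprimed vertices (`inl`) get labels from `J`, primed vertices (`inr`) from `I`. -/
def label {k n : ℕ} (J I : Fin k → Fin n) : Fin k ⊕ Fin k → Fin n := Sum.elim J I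

/-- `C_P(J, I)`: equal to `1` if the labelling `ℓ_{J,I}` is constant on every part of the
set partition `P` (i.e. every part is monochromatic), and `0` otherwise. -/
def CP {k n : ℕ} (P : Setoid (Fin k ⊕ Fin k)) (J I : Fin k → Fin n) : ℂ :=
  if ∀ a b, P.r a b → label J I a = label J I b then 1 else 0

/-- `C'_P(J, I)`: equal to `1` if the labelling `ℓ_{J,I}` is constant on every part of `P`
and takes distinct values on distinct parts of `P`, and `0` otherwise. -/
def CP' {k n : ℕ} (P : Setoid (Fin k ⊕ Fin k)) (J I : Fin k → Fin n) : ℂ :=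
  if (∀ a b, P.r a b → label J I a = label J I b) ∧
      (∀ a b, ¬ P.r a b → label J I a ≠ label J I b) then 1 else 0

/-- The operator `T_P : W_{k,n} → W_{k,n}`, `(T_P f)(J) = Σ_I C_P(J,I) f(I)`. -/
def TP (k n : ℕ) (P : Setoid (Fin k ⊕ Fin k)) : W k n →ₗ[ℂ] W k n :=
  Matrix.mulVecLin (Matrix.of fun J I => CP P J I)

/-- The operator `T'_P : W_{k,n} → W_{k,n}`, `(T'_P f)(J) = Σ_I C'_P(J,I) f(I)`. -/
def TP' (k n : ℕ) (P : Setoid (Fin k ⊕ Fin k)) : W k n →ₗ[ℂ] W k n :=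
  Matrix.mulVecLin (Matrix.of fun J I => CP' P J I)

/-- The action `ρ(g)` of `S_n` on `W k n`: `(ρ(g) f)(I) = f(g⁻¹ ∘ I)`. -/
def rho (k n : ℕ) (g : Equiv.Perm (Fin n)) : W k n →ₗ[ℂ] W k n where
  toFun f := fun I => f (⇑g⁻¹ ∘ I)
  map_add' _ _ := rfl
  map_smul' _ _ := rfl

/-- The map `E_σ : ℂ → W_{k,n}` sending `1` to the sum of `v_I` over `σ`-sorted words `I`. -/
def Esig (k n : ℕ) (σ : Fin k → Fin k) : ℂ →ₗ[ℂ] W k n where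
  toFun c := fun I => if IsSorted σ I then c else 0
  map_add' a b := by
    funext I; by_cases h : IsSorted σ I <;> simp [h]
  map_smul' a b := by
    funext I; by_cases h : IsSorted σ I <;> simp [h]

/-- The transpose map `E_σ^T : W_{k,n} → ℂ`, `f ↦ Σ_{I σ-sorted} f(I)`. -/
def EsigT (k n : ℕ) (σ : Fin k → Fin k) : W k n →ₗ[ℂ] ℂ where
  toFun f := ∑ I ∈ Finset.univ.filter (fun I : Fin k → Fin n => IsSorted σ I), f I
  map_add' f g := Finset.sum_add_distrib
  map_smul' c f := by simp [Finset.mul_sum]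

/-- There are finitely many set partitions (equivalence relations) on a finite type. -/
noncomputable instance {α : Type*} [Finite α] : Fintype (Setoid α) := by
  have : Finite (Setoid α) :=
    Finite.of_injective (fun s : Setoid α => s.r)
      (fun s t h => by cases s; cases t; cases h; rfl)
  exact Fintype.ofFinite _


open Finset Function

section AveragingAux

/-- Sortedness only depends on the relative order of values: composing with a strictly
monotone map does not change it. -/
lemma isSorted_comp_strictMono {k : ℕ} {M N : Type*} [LinearOrder M] [LinearOrder N]
    {f : M → N} (hf : StrictMono f) (σ : Fin k → Fin k) (I : Fin k → M) :
    IsSorted σ (f ∘ I) ↔ IsSorted σ I := by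
  unfold IsSorted
  simp [Function.comp, hf.lt_iff_lt]

/-- Any two injections of a finite type into `Fin n` differ by a permutation. -/
lemma exists_perm_comp {n : ℕ} {T : Type*} [Fintype T] {u j : T → Fin n}
    (hu : Injective u) (hj : Injective j) : ∃ x : Equiv.Perm (Fin n), ⇑x ∘ u = j := by
  let e₀ : (Set.range u) ≃ (Set.range j) :=
    (Equiv.ofInjective u hu).symm.trans (Equiv.ofInjective j hj)
  have hcard : Fintype.card ((Set.range u)ᶜ : Set (Fin n))
      = Fintype.card ((Set.range j)ᶜ : Set (Fin n)) := by
    rw [Fintype.card_compl_set, Fintype.card_compl_set,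
      Set.card_range_of_injective hu, Set.card_range_of_injective hj]
  obtain ⟨x, hx⟩ := (Equiv.Set.compl e₀).symm (Fintype.equivOfCardEq hcard)
  refine ⟨x, funext fun t => ?_⟩
  have h := hx ⟨u t, Set.mem_range_self t⟩
  simpa [e₀, Equiv.ofInjective_symm_apply] using h

/-- The number of permutations extending a given bijection between the images of two
injections of a finite type `T` into `Fin n` is `(n - |T|)!`. -/
lemma card_fiber {n : ℕ} {T : Type*} [Fintype T] {u j : T → Fin n}
    (hu : Injective u) (hj : Injective j) :
    (univ.filter fun x : Equiv.Perm (Fin n) => ⇑x ∘ u = j).card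
      = (n - Fintype.card T).factorial := by
  let e₀ : (Set.range u) ≃ (Set.range j) :=
    (Equiv.ofInjective u hu).symm.trans (Equiv.ofInjective j hj)
  have hcard : Fintype.card ((Set.range u)ᶜ : Set (Fin n))
      = Fintype.card ((Set.range j)ᶜ : Set (Fin n)) := by
    rw [Fintype.card_compl_set, Fintype.card_compl_set,
      Set.card_range_of_injective hu, Set.card_range_of_injective hj]
  have E : {x : Equiv.Perm (Fin n) // ⇑x ∘ u = j}
      ≃ (((Set.range u)ᶜ : Set (Fin n)) ≃ ((Set.range j)ᶜ : Set (Fin n))) := by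
    refine (Equiv.subtypeEquivRight ?_).trans (Equiv.Set.compl e₀)
    intro x
    constructor
    · rintro h ⟨-, t, rfl⟩
      simpa [e₀, Equiv.ofInjective_symm_apply] using congrFun h t
    · intro h
      funext t
      have := h ⟨u t, Set.mem_range_self t⟩
      simpa [e₀, Equiv.ofInjective_symm_apply] using this
  rw [← Fintype.card_subtype, Fintype.card_congr E,
    Fintype.card_equiv (Fintype.equivOfCardEq hcard), Fintype.card_compl_set,
    Set.card_range_of_injective hu, Fintype.card_fin]

/-- Summing `F (x ∘ u)` over all permutations `x` equals `(n - |T|)!` times the sum of `F`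
over all injections `T → Fin n`. -/
lemma sum_perm_comp {n : ℕ} {T : Type*} [Fintype T] {u : T → Fin n} (hu : Injective u)
    (F : (T → Fin n) → ℂ) :
    ∑ x : Equiv.Perm (Fin n), F (⇑x ∘ u) =
      (n - Fintype.card T).factorial •
        ∑ j ∈ univ.filter (fun j : T → Fin n => Injective j), F j := by
  have hsc := Finset.sum_comp (κ := T → Fin n) (s := (univ : Finset (Equiv.Perm (Fin n)))) F
    (fun x : Equiv.Perm (Fin n) => ⇑x ∘ u)
  rw [hsc]
  have himg : (univ : Finset (Equiv.Perm (Fin n))).image (fun x : Equiv.Perm (Fin n) => ⇑x ∘ u)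
      = univ.filter (fun j : T → Fin n => Injective j) := by
    ext j
    simp only [mem_image, mem_filter, mem_univ, true_and]
    constructor
    · rintro ⟨x, -, rfl⟩; exact x.injective.comp hu
    · intro hj
      obtain ⟨x, hx⟩ := exists_perm_comp hu hj
      exact ⟨x, hx⟩
  rw [himg, Finset.smul_sum]
  refine Finset.sum_congr rfl fun j hj => ?_
  rw [card_fiber hu (mem_filter.mp hj).2]

/-- An injection of an `m`-element type into `Fin n` is determined by its image (an
`m`-element subset) together with its relative order (an equivalence with `Fin m`).
If the property `G` only depends on the relative order, the corresponding count factors. -/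
lemma card_inj_filter {n m : ℕ} {T : Type*} [Fintype T] (hm : Fintype.card T = m)
    (G : (T → Fin n) → Prop) (G' : (T ≃ Fin m) → Prop)
    (hGG' : ∀ (e : T ≃ Fin m) (f : Fin m → Fin n), StrictMono f → (G (f ∘ ⇑e) ↔ G' e)) :
    (univ.filter fun j : T → Fin n => Injective j ∧ G j).card
      = n.choose m * (univ.filter fun e : T ≃ Fin m => G' e).card := by
  let Φ : ({A : Finset (Fin n) // A.card = m} × {e : T ≃ Fin m // G' e})
      → {j : T → Fin n // Injective j ∧ G j} :=
    fun p => ⟨⇑(p.1.1.orderEmbOfFin p.1.2) ∘ ⇑p.2.1,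
      (p.1.1.orderEmbOfFin p.1.2).injective.comp p.2.1.injective,
      (hGG' p.2.1 _ (p.1.1.orderEmbOfFin p.1.2).strictMono).mpr p.2.2⟩
  have hbij : Function.Bijective Φ := by
    constructor
    · rintro ⟨A, e⟩ ⟨A', e'⟩ h
      have h' : ⇑(A.1.orderEmbOfFin A.2) ∘ ⇑e.1 = ⇑(A'.1.orderEmbOfFin A'.2) ∘ ⇑e'.1 :=
        congrArg Subtype.val h
      have hA : A = A' := by
        apply Subtype.ext
        apply Finset.coe_injective
        rw [← Finset.range_orderEmbOfFin A.1 A.2, ← Finset.range_orderEmbOfFin A'.1 A'.2,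
          ← Set.image_univ, ← e.1.surjective.range_eq, ← Set.range_comp, h',
          Set.range_comp, e'.1.surjective.range_eq, Set.image_univ]
      subst hA
      have he : e = e' := by
        apply Subtype.ext
        apply Equiv.ext
        intro t
        exact (A.1.orderEmbOfFin A.2).injective (congrFun h' t)
      rw [he]
    · rintro ⟨j, hj, hG⟩
      set A : Finset (Fin n) := univ.image j with hAdef
      have hA : A.card = m := by
        rw [hAdef, Finset.card_image_of_injective _ hj, card_univ, hm]
      have hmem : ∀ t, j t ∈ A := fun t => mem_image_of_mem _ (mem_univ t)
      set e₁ : T → Fin m := fun t => (A.orderIsoOfFin hA).symm ⟨j t, hmem t⟩ with he₁def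
      have he₁ : Injective e₁ := by
        intro s t h
        apply hj
        have := congrArg (fun z => ((A.orderIsoOfFin hA) z : Fin n)) h
        simpa [he₁def] using this
      have hbij₁ : Bijective e₁ :=
        (Fintype.bijective_iff_injective_and_card e₁).mpr ⟨he₁, by simp [hm]⟩
      set e : T ≃ Fin m := Equiv.ofBijective e₁ hbij₁ with hedef
      have hcomp : ⇑(A.orderEmbOfFin hA) ∘ ⇑e = j := by
        funext t
        show A.orderEmbOfFin hA (e₁ t) = j t
        rw [← Finset.coe_orderIsoOfFin_apply, he₁def, OrderIso.apply_symm_apply]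
      have hG' : G' e := (hGG' e _ (A.orderEmbOfFin hA).strictMono).mp
        (by rw [hcomp]; exact hG)
      exact ⟨⟨⟨A, hA⟩, ⟨e, hG'⟩⟩, Subtype.ext hcomp⟩
  calc (univ.filter fun j : T → Fin n => Injective j ∧ G j).card
      = Fintype.card {j : T → Fin n // Injective j ∧ G j} := (Fintype.card_subtype _).symm
    _ = Fintype.card ({A : Finset (Fin n) // A.card = m} × {e : T ≃ Fin m // G' e}) :=
        (Fintype.card_congr (Equiv.ofBijective Φ hbij)).symm
    _ = Fintype.card {A : Finset (Fin n) // A.card = m} * Fintype.card {e : T ≃ Fin m // G' e} :=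
        Fintype.card_prod _ _
    _ = n.choose m * (univ.filter fun e : T ≃ Fin m => G' e).card := by
        rw [Fintype.card_finset_len, Fintype.card_fin, Fintype.card_subtype]

/-- The master counting identity: the average over all permutations of the indicator of an
order-invariant property of `x ∘ u` equals a quantity depending only on the relative-order
data, not on `n`. -/
lemma master_count {n : ℕ} {T : Type*} [Fintype T] {u : T → Fin n} (hu : Injective u)
    (G : (T → Fin n) → Prop) (G' : (T ≃ Fin (Nat.card T)) → Prop)
    (hGG' : ∀ (e : T ≃ Fin (Nat.card T)) (f : Fin (Nat.card T) → Fin n), StrictMono f →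
      (G (f ∘ ⇑e) ↔ G' e)) :
    ((n.factorial : ℂ))⁻¹ * ∑ x : Equiv.Perm (Fin n), (if G (⇑x ∘ u) then (1:ℂ) else 0)
      = (Nat.card {e : T ≃ Fin (Nat.card T) // G' e} : ℂ) / ((Nat.card T).factorial : ℂ) := by
  have hm : Fintype.card T = Nat.card T := Nat.card_eq_fintype_card.symm
  have hmn : Nat.card T ≤ n := by
    rw [← hm]
    simpa using Fintype.card_le_of_injective u hu
  rw [sum_perm_comp hu (fun jf => if G jf then (1:ℂ) else 0)]
  have hinner : ∑ j ∈ univ.filter (fun j : T → Fin n => Injective j),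
        (if G j then (1:ℂ) else 0)
      = ((univ.filter fun j : T → Fin n => Injective j ∧ G j).card : ℂ) := by
    rw [Finset.sum_filter, ← Finset.sum_boole]
    refine Finset.sum_congr rfl fun j _ => ?_
    by_cases h1 : Injective j <;> by_cases h2 : G j <;> simp [h1, h2]
  rw [hinner, card_inj_filter hm G G' hGG']
  have hcnt : (Nat.card {e : T ≃ Fin (Nat.card T) // G' e})
      = (univ.filter fun e : T ≃ Fin (Nat.card T) => G' e).card := by
    rw [Nat.card_eq_fintype_card, Fintype.card_subtype]
  rw [hcnt, hm]
  have harith : ∀ (m c : ℕ), m ≤ n →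
      ((n.factorial : ℂ))⁻¹ * (n - m).factorial • ((n.choose m * c : ℕ) : ℂ)
        = (c : ℂ) / (m.factorial : ℂ) := by
    intro m c hmle
    have hfac : ((n.choose m * m.factorial * (n - m).factorial : ℕ) : ℂ)
        = (n.factorial : ℂ) := by
      exact_mod_cast congrArg (Nat.cast : ℕ → ℂ) (Nat.choose_mul_factorial_mul_factorial hmle)
    have hm0 : ((m.factorial : ℂ)) ≠ 0 := Nat.cast_ne_zero.mpr (Nat.factorial_ne_zero m)
    have hn0 : ((n.factorial : ℂ)) ≠ 0 := Nat.cast_ne_zero.mpr (Nat.factorial_ne_zero n)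
    push_cast at hfac ⊢
    rw [nsmul_eq_mul]
    field_simp
    linear_combination (c : ℂ) * hfac
  exact harith _ _ hmn

/-- The coefficient attached to a set partition `Q`, independent of `n`: the proportion of
orderings of the parts of `Q` for which the induced words are `α`- resp. `β`-sorted. -/
def cQ {k : ℕ} (α β : Fin k → Fin k) (Q : Setoid (Fin k ⊕ Fin k)) : ℂ :=
  (Nat.card {e : Quotient Q ≃ Fin (Nat.card (Quotient Q)) //
      IsSorted α (⇑e ∘ fun r => Quotient.mk Q (Sum.inl r)) ∧
      IsSorted β (⇑e ∘ fun r => Quotient.mk Q (Sum.inr r))} : ℂ) /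
    ((Nat.card (Quotient Q)).factorial : ℂ)

/-- The key identity: the average over `S_n` of the product of sortedness indicators of
`x ∘ J` and `x ∘ I` equals `cQ` of the kernel partition of the labelling `ℓ_{J,I}`. -/
lemma key_identity {k : ℕ} (α β : Fin k → Fin k) {n : ℕ} (J I : Fin k → Fin n) :
    ((n.factorial : ℂ))⁻¹ * ∑ x : Equiv.Perm (Fin n),
        (if IsSorted α (⇑x ∘ J) then (1:ℂ) else 0) * (if IsSorted β (⇑x ∘ I) then 1 else 0)
      = cQ α β (Setoid.ker (label J I)) := by
  set Q := Setoid.ker (label J I) with hQdef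
  set u : Quotient Q → Fin n := Quotient.lift (label J I) (fun _ _ h => h) with hudef
  have hu : Function.Injective u := Setoid.kerLift_injective (label J I)
  have hstep : ∀ x : Equiv.Perm (Fin n),
      (if IsSorted α (⇑x ∘ J) then (1:ℂ) else 0) * (if IsSorted β (⇑x ∘ I) then 1 else 0)
        = @ite ℂ (IsSorted α ((⇑x ∘ u) ∘ fun r => Quotient.mk Q (Sum.inl r)) ∧
              IsSorted β ((⇑x ∘ u) ∘ fun r => Quotient.mk Q (Sum.inr r)))
            (Classical.propDecidable _) (1:ℂ) 0 := by
    intro x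
    have h1 : ((⇑x ∘ u) ∘ fun r => Quotient.mk Q (Sum.inl r)) = ⇑x ∘ J := by funext r; rfl
    have h2 : ((⇑x ∘ u) ∘ fun r => Quotient.mk Q (Sum.inr r)) = ⇑x ∘ I := by funext r; rfl
    rw [h1, h2]
    by_cases hA : IsSorted α (⇑x ∘ J) <;> by_cases hB : IsSorted β (⇑x ∘ I) <;>
      simp [hA, hB]
  rw [Finset.sum_congr rfl (fun x _ => hstep x)]
  exact master_count hu
    (fun jf => IsSorted α (jf ∘ fun r => Quotient.mk Q (Sum.inl r)) ∧
               IsSorted β (jf ∘ fun r => Quotient.mk Q (Sum.inr r)))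
    (fun e => IsSorted α (⇑e ∘ fun r => Quotient.mk Q (Sum.inl r)) ∧
              IsSorted β (⇑e ∘ fun r => Quotient.mk Q (Sum.inr r)))
    (by
      intro e f hf
      show (IsSorted α (f ∘ (⇑e ∘ fun r => Quotient.mk Q (Sum.inl r))) ∧
            IsSorted β (f ∘ (⇑e ∘ fun r => Quotient.mk Q (Sum.inr r)))) ↔
           (IsSorted α (⇑e ∘ fun r => Quotient.mk Q (Sum.inl r)) ∧
            IsSorted β (⇑e ∘ fun r => Quotient.mk Q (Sum.inr r)))
      rw [isSorted_comp_strictMono hf, isSorted_comp_strictMono hf])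

/-- Möbius inversion on the finite poset of set partitions: there are coefficients `a`
whose sums over down-sets realize the prescribed values `cQ`. -/
lemma exists_a {k : ℕ} (α β : Fin k → Fin k) :
    ∃ a : Setoid (Fin k ⊕ Fin k) → ℂ,
      ∀ Q : Setoid (Fin k ⊕ Fin k),
        ∑ P ∈ univ.filter (fun P => P ≤ Q), a P = cQ α β Q := by
  let L : (Setoid (Fin k ⊕ Fin k) → ℂ) →ₗ[ℂ] (Setoid (Fin k ⊕ Fin k) → ℂ) :=
    { toFun := fun a Q => ∑ P ∈ univ.filter (fun P => P ≤ Q), a P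
      map_add' := fun a b => by funext Q; exact Finset.sum_add_distrib
      map_smul' := fun c a => by funext Q; simp [Finset.mul_sum] }
  have hker : ∀ a, L a = 0 → a = 0 := by
    intro a ha
    funext Q
    induction Q using WellFoundedLT.induction with
    | _ Q ih =>
      have hsplit : univ.filter (fun P : Setoid (Fin k ⊕ Fin k) => P ≤ Q)
          = insert Q (univ.filter (fun P => P < Q)) := by
        ext P
        simp only [mem_filter, mem_univ, true_and, mem_insert]
        rw [le_iff_lt_or_eq]
        tauto
      have h0 : (0 : ℂ) = ∑ P ∈ univ.filter (fun P : Setoid (Fin k ⊕ Fin k) => P ≤ Q), a P :=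
        (congrFun ha Q).symm
      rw [hsplit, Finset.sum_insert (by simp)] at h0
      have hz : ∑ P ∈ univ.filter (fun P : Setoid (Fin k ⊕ Fin k) => P < Q), a P = 0 :=
        Finset.sum_eq_zero fun P hP => ih P (mem_filter.mp hP).2
      rw [hz, add_zero] at h0
      exact h0.symm
  have hinj : Function.Injective L := by
    rw [← LinearMap.ker_eq_bot, LinearMap.ker_eq_bot']
    intro a ha
    exact hker a ha
  have hsurj : Function.Surjective L := LinearMap.injective_iff_surjective.mp hinj
  obtain ⟨a, ha⟩ := hsurj (cQ α β)
  exact ⟨a, fun Q => congrFun ha Q⟩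

end AveragingAux

/-- For fixed `α, β : Fin k → Fin k` there are coefficients `a_P`,
independent of `n`, such that for every `n` the `S_n`-average of
`ρ(x)⁻¹ ∘ (E_α ∘ E_β^T) ∘ ρ(x)` equals `Σ_P a_P · T_P`. -/
theorem averaging_theorem (k : ℕ) (hk : 0 < k) (α β : Fin k → Fin k) :
    ∃ a : Setoid (Fin k ⊕ Fin k) → ℂ, ∀ n : ℕ, 0 < n →
      ((n.factorial : ℂ)⁻¹ • ∑ x : Equiv.Perm (Fin n),
          (rho k n x⁻¹) ∘ₗ ((Esig k n α) ∘ₗ (EsigT k n β)) ∘ₗ (rho k n x)) =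
        ∑ P : Setoid (Fin k ⊕ Fin k), a P • TP k n P := by
  obtain ⟨a, ha⟩ := exists_a α β
  refine ⟨a, fun n hn => ?_⟩
  apply LinearMap.ext
  intro f
  funext J
  have hLx : ∀ x : Equiv.Perm (Fin n),
      ((rho k n x⁻¹) ∘ₗ ((Esig k n α) ∘ₗ (EsigT k n β)) ∘ₗ (rho k n x)) f J
      = ∑ I : Fin k → Fin n,
          (if IsSorted α (⇑x ∘ J) then (1:ℂ) else 0)
            * (if IsSorted β (⇑x ∘ I) then 1 else 0) * f I := by
    intro x
    show (Esig k n α) ((EsigT k n β) ((rho k n x) f)) (⇑(x⁻¹)⁻¹ ∘ J) = _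
    rw [inv_inv]
    show (if IsSorted α (⇑x ∘ J) then
        ∑ I ∈ univ.filter (fun I : Fin k → Fin n => IsSorted β I), f (⇑x⁻¹ ∘ I) else 0) = _
    have hbij : Function.Bijective (fun I : Fin k → Fin n => ⇑x ∘ I) :=
      ((Equiv.refl (Fin k)).arrowCongr x).bijective
    calc (if IsSorted α (⇑x ∘ J) then
          ∑ I ∈ univ.filter (fun I : Fin k → Fin n => IsSorted β I), f (⇑x⁻¹ ∘ I) else 0)
        = ∑ I : Fin k → Fin n,
            (if IsSorted β I then
              (if IsSorted α (⇑x ∘ J) then f (⇑x⁻¹ ∘ I) else 0) else 0) := by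
          by_cases hA : IsSorted α (⇑x ∘ J) <;> simp [hA, Finset.sum_filter]
      _ = ∑ I : Fin k → Fin n,
            (if IsSorted β (⇑x ∘ I) then
              (if IsSorted α (⇑x ∘ J) then f (⇑x⁻¹ ∘ (⇑x ∘ I)) else 0) else 0) :=
          (Fintype.sum_bijective _ hbij _ _ (fun I => rfl)).symm
      _ = ∑ I : Fin k → Fin n,
            (if IsSorted α (⇑x ∘ J) then (1:ℂ) else 0)
              * (if IsSorted β (⇑x ∘ I) then 1 else 0) * f I := by
          refine Finset.sum_congr rfl fun I _ => ?_
          have hxx : ⇑x⁻¹ ∘ (⇑x ∘ I) = I := by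
            funext r; simp
          rw [hxx]
          by_cases hA : IsSorted α (⇑x ∘ J) <;> by_cases hB : IsSorted β (⇑x ∘ I) <;>
            simp [hA, hB]
  have hL : (((n.factorial : ℂ)⁻¹ • ∑ x : Equiv.Perm (Fin n),
        (rho k n x⁻¹) ∘ₗ ((Esig k n α) ∘ₗ (EsigT k n β)) ∘ₗ (rho k n x)) f) J
      = ∑ I : Fin k → Fin n,
          (((n.factorial : ℂ))⁻¹ * ∑ x : Equiv.Perm (Fin n),
            (if IsSorted α (⇑x ∘ J) then (1:ℂ) else 0)
              * (if IsSorted β (⇑x ∘ I) then 1 else 0)) * f I := by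
    rw [LinearMap.smul_apply, LinearMap.sum_apply]
    have : ((∑ x : Equiv.Perm (Fin n),
        ((rho k n x⁻¹) ∘ₗ ((Esig k n α) ∘ₗ (EsigT k n β)) ∘ₗ (rho k n x)) f) : W k n) J
        = ∑ x : Equiv.Perm (Fin n),
            ((rho k n x⁻¹) ∘ₗ ((Esig k n α) ∘ₗ (EsigT k n β)) ∘ₗ (rho k n x)) f J := by
      rw [Finset.sum_apply]
    rw [Pi.smul_apply, this, Finset.sum_congr rfl (fun x _ => hLx x), smul_eq_mul,
      Finset.sum_comm, Finset.mul_sum]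
    refine Finset.sum_congr rfl fun I _ => ?_
    rw [← Finset.sum_mul, mul_assoc]
  have hR : ((∑ P : Setoid (Fin k ⊕ Fin k), a P • TP k n P) f) J
      = ∑ I : Fin k → Fin n,
          (∑ P : Setoid (Fin k ⊕ Fin k), a P * CP P J I) * f I := by
    rw [LinearMap.sum_apply, Finset.sum_apply]
    have hTP : ∀ P : Setoid (Fin k ⊕ Fin k),
        ((a P • TP k n P) f) J = ∑ I : Fin k → Fin n, a P * (CP P J I * f I) := by
      intro P
      have h1 : ((a P • TP k n P) f) J = a P * ((TP k n P) f J) := rfl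
      have h2 : (TP k n P) f J = ∑ I : Fin k → Fin n, CP P J I * f I := rfl
      rw [h1, h2, Finset.mul_sum]
    rw [Finset.sum_congr rfl (fun P _ => hTP P)]
    rw [Finset.sum_comm]
    refine Finset.sum_congr rfl fun I _ => ?_
    rw [Finset.sum_mul]
    exact Finset.sum_congr rfl fun P _ => by ring
  rw [hL, hR]
  refine Finset.sum_congr rfl fun I _ => ?_
  congr 1
  rw [key_identity α β J I]
  rw [← ha (Setoid.ker (label J I))]
  rw [Finset.sum_filter]
  refine Finset.sum_congr rfl fun P _ => ?_
  have hiff : (∀ a b, P.r a b → label J I a = label J I b) ↔ P ≤ Setoid.ker (label J I) := by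
    constructor
    · intro h x y hxy
      exact h x y hxy
    · intro h x y hxy
      exact h hxy
  by_cases hP : P ≤ Setoid.ker (label J I)
  · rw [CP, if_pos (hiff.mpr hP), if_pos hP, mul_one]
  · rw [CP, if_neg (fun h => hP (hiff.mp h)), if_neg hP, mul_zero]
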